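/- For any natural number n ≥ 1 and real x, the sum over all permutations σ of {1,...,n} of sign(σ)·x^(fix(σ)) equals (x - 1 + n)(x - 1)^(n-1), where fix(σ) is the number of fixed points of σ. -/

import Mathlib

open Matrix

lemma lhs_eq_det (n : ℕ) (x : ℝ) :
    (∑ σ : Equiv.Perm (Fin n),
      ((Equiv.Perm.sign σ : ℤ) : ℝ) * x ^ (Finset.univ.filter fun i => σ i = i).card)
      = (Matrix.of fun i j : Fin n => if i = j then x else 1).det := by
  rw [Matrix.det_apply']
  refine Finset.sum_congr rfl fun σ _ => ?_
  congr 1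
  rw [← Finset.prod_const x, Finset.prod_filter]
  refine Finset.prod_congr rfl fun i _ => ?_
  simp [Matrix.of_apply]

lemma det_eq (n : ℕ) (hn : 1 ≤ n) (x : ℝ) (hx : x ≠ 1) :
    (Matrix.of fun i j : Fin n => if i = j then x else 1).det
      = (x - 1 + n) * (x - 1) ^ (n - 1) := by
  have h1 : x - 1 ≠ 0 := sub_ne_zero.mpr hx
  have key : (Matrix.of fun i j : Fin n => if i = j then x else 1)
      = (x - 1) • (1 + replicateCol Unit (fun _ : Fin n => (x - 1)⁻¹) * replicateRow Unit (fun _ : Fin n => (1:ℝ))) := by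
    ext i j
    simp only [Matrix.of_apply, Matrix.smul_apply, Matrix.add_apply, Matrix.mul_apply,
      Matrix.replicateCol_apply, Matrix.replicateRow_apply, Finset.univ_unique, Finset.sum_singleton,
      smul_eq_mul, mul_one]
    by_cases h : i = j
    · rw [if_pos h, h, Matrix.one_apply_eq]
      field_simp
      ring
    · rw [if_neg h, Matrix.one_apply_ne h]
      field_simp
      ring
  rw [key, Matrix.det_smul, Matrix.det_one_add_replicateCol_mul_replicateRow]
  simp only [dotProduct, Finset.sum_const, Finset.card_univ, Fintype.card_fin,
    nsmul_eq_mul, smul_eq_mul, mul_one]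
  have : (x - 1) ^ n = (x - 1) * (x - 1) ^ (n - 1) := by
    rw [← pow_succ']
    congr 1
    omega
  rw [this]
  field_simp

theorem signed_fix_gen (n : ℕ) (hn : 1 ≤ n) (x : ℝ) :
    (∑ σ : Equiv.Perm (Fin n),
      ((Equiv.Perm.sign σ : ℤ) : ℝ) * x ^ (Finset.univ.filter fun i => σ i = i).card)
      = (x - 1 + n) * (x - 1) ^ (n - 1) := by
  revert x
  have h : ∀ x : ℝ, x ≠ 1 → (∑ σ : Equiv.Perm (Fin n),
      ((Equiv.Perm.sign σ : ℤ) : ℝ) * x ^ (Finset.univ.filter fun i => σ i = i).card)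
      = (x - 1 + n) * (x - 1) ^ (n - 1) := fun x hx =>
    (lhs_eq_det n x).trans (det_eq n hn x hx)
  intro x
  have hc1 : Continuous fun x : ℝ => (∑ σ : Equiv.Perm (Fin n),
      ((Equiv.Perm.sign σ : ℤ) : ℝ) * x ^ (Finset.univ.filter fun i => σ i = i).card) := by
    fun_prop
  have hc2 : Continuous fun x : ℝ => (x - 1 + n) * (x - 1) ^ (n - 1) := by fun_prop
  have := Continuous.ext_on (dense_compl_singleton (1:ℝ)) hc1 hc2 (fun y hy => h y hy)
  exact congrFun this x
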